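/- Let k be a field and n ≥ 2. Let A = {a_ij ∈ k : 1 ≤ i < j ≤ n} be a set of scalars, and let V_n(A) be the k-algebra generated by x_1,…,x_n subject to the relations x_i x_j + x_j x_i = a_ij for all i < j. For a permutation σ ∈ S_n and nonzero scalars r_1,…,r_n ∈ k, the assignment x_i ↦ r_i x_{σ(i)} extends to an algebra automorphism of V_n(A) if and only if a_ij = r_i r_j a_{σ(i)σ(j)} for all i ≠ j (with the convention a_ji = a_ij). -/

import Mathlib

noncomputable section

/-- The defining relations of the modified (−1)-quantum Weyl algebra `V_n(𝒜)`:
`x_i x_j + x_j x_i = a_{ij}` for all `i < j`. -/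
def weylRel {k : Type} [CommRing k] (n : ℕ) (a : Fin n → Fin n → k) :
    FreeAlgebra k (Fin n) → FreeAlgebra k (Fin n) → Prop :=
  fun u v => ∃ i j : Fin n, i < j ∧
    u = FreeAlgebra.ι k i * FreeAlgebra.ι k j + FreeAlgebra.ι k j * FreeAlgebra.ι k i ∧
    v = algebraMap k (FreeAlgebra k (Fin n)) (a i j)

/-- The modified (−1)-quantum Weyl algebra `V_n(𝒜)`. -/
abbrev weylV (k : Type) [CommRing k] (n : ℕ) (a : Fin n → Fin n → k) :=
  RingQuot (weylRel n a)

/-- The generators `x_i` of `V_n(𝒜)`. -/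
def weylX (k : Type) [CommRing k] (n : ℕ) (a : Fin n → Fin n → k) (i : Fin n) :
    weylV k n a :=
  RingQuot.mkAlgHom k (weylRel n a) (FreeAlgebra.ι k i)

section aux

variable {k : Type} [Field k] {n : ℕ} (a : Fin n → Fin n → k)

/-- The anticommutation relation holds in `V_n(𝒜)` for all pairs `i ≠ j`. -/
lemma weyl_anticomm (hsym : ∀ i j, a i j = a j i) {i j : Fin n} (hij : i ≠ j) :
    weylX k n a i * weylX k n a j + weylX k n a j * weylX k n a i
      = algebraMap k (weylV k n a) (a i j) := by
  rcases hij.lt_or_gt with h | h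
  · have := RingQuot.mkAlgHom_rel k (s := weylRel n a)
      (⟨i, j, h, rfl, rfl⟩ : weylRel n a _ _)
    simpa [weylX, map_add, map_mul] using this
  · have := RingQuot.mkAlgHom_rel k (s := weylRel n a)
      (⟨j, i, h, rfl, rfl⟩ : weylRel n a _ _)
    rw [hsym i j]
    rw [add_comm]
    simpa [weylX, map_add, map_mul] using this

/-- Lift a family satisfying the relations to an algebra hom out of `V_n(𝒜)`. -/
def weylLift (b : Type) [Ring b] [Algebra k b] (f : Fin n → b)
    (hf : ∀ i j : Fin n, i < j → f i * f j + f j * f i = algebraMap k b (a i j)) :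
    weylV k n a →ₐ[k] b :=
  RingQuot.liftAlgHom k ⟨FreeAlgebra.lift k f, by
    rintro x y ⟨i, j, hij, rfl, rfl⟩
    simp only [map_add, map_mul, FreeAlgebra.lift_ι_apply, AlgHom.commutes]
    exact hf i j hij⟩

@[simp] lemma weylLift_X (b : Type) [Ring b] [Algebra k b] (f : Fin n → b)
    (hf : ∀ i j : Fin n, i < j → f i * f j + f j * f i = algebraMap k b (a i j)) (i : Fin n) :
    weylLift a b f hf (weylX k n a i) = f i := by
  rw [weylLift, weylX, RingQuot.liftAlgHom_mkAlgHom_apply, FreeAlgebra.lift_ι_apply]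

/-- Algebra homs out of `V_n(𝒜)` are determined by their values on the generators. -/
lemma weyl_hom_ext {b : Type} [Ring b] [Algebra k b] {F G : weylV k n a →ₐ[k] b}
    (h : ∀ i, F (weylX k n a i) = G (weylX k n a i)) : F = G := by
  have key : F.comp (RingQuot.mkAlgHom k (weylRel n a))
      = G.comp (RingQuot.mkAlgHom k (weylRel n a)) :=
    FreeAlgebra.hom_ext (funext fun i => by simpa [weylX] using h i)
  refine AlgHom.ext fun x => ?_
  obtain ⟨y, rfl⟩ := RingQuot.mkAlgHom_surjective k (weylRel n a) x
  exact DFunLike.congr_fun key y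

/-- `V_n(𝒜)` is nontrivial: the algebra map from `k` is injective (Clifford algebra model). -/
lemma weyl_algebraMap_injective (hsym : ∀ i j, a i j = a j i) :
    Function.Injective (algebraMap k (weylV k n a)) := by
  classical
  set Mt : Matrix (Fin n) (Fin n) k := fun i j => if i < j then a i j else 0 with hMt
  set B : LinearMap.BilinForm k (Fin n → k) := Matrix.toLinearMap₂' k Mt with hB
  set Q : QuadraticForm k (Fin n → k) := B.toQuadraticMap with hQ
  set e : Fin n → (Fin n → k) := fun i => Pi.single i 1 with he
  have hpolar : ∀ i j : Fin n, i < j →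
      QuadraticMap.polar Q (e i) (e j) = a i j := by
    intro i j hij
    rw [hQ, LinearMap.BilinMap.polar_toQuadraticMap, hB, he]
    beta_reduce
    rw [Matrix.toLinearMap₂'_apply, Matrix.toLinearMap₂'_apply, Fintype.sum_eq_single i,
      Fintype.sum_eq_single j, Fintype.sum_eq_single j, Fintype.sum_eq_single i]
    · simp [hMt, hij, not_lt_of_gt hij]
    all_goals intros; simp [*]
  have hf : ∀ i j : Fin n, i < j →
      CliffordAlgebra.ι Q (e i) * CliffordAlgebra.ι Q (e j)
        + CliffordAlgebra.ι Q (e j) * CliffordAlgebra.ι Q (e i)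
        = algebraMap k (CliffordAlgebra Q) (a i j) := by
    intro i j hij
    rw [CliffordAlgebra.ι_mul_ι_add_swap, hpolar i j hij]
  haveI : Nontrivial (CliffordAlgebra (0 : QuadraticForm k (Fin n → k))) :=
    (inferInstance : Nontrivial (ExteriorAlgebra k (Fin n → k)))
  haveI : Nontrivial (CliffordAlgebra Q) := by
    have h0 : B.toQuadraticMap = Q - 0 := by rw [hQ, sub_zero]
    exact (CliffordAlgebra.changeFormEquiv h0).injective.nontrivial
  set φ : weylV k n a →ₐ[k] CliffordAlgebra Q :=
    weylLift a _ (fun i => CliffordAlgebra.ι Q (e i)) hf with hφ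
  intro c d hcd
  have : algebraMap k (CliffordAlgebra Q) c = algebraMap k (CliffordAlgebra Q) d := by
    have := congrArg φ hcd
    rwa [AlgHom.commutes, AlgHom.commutes] at this
  exact (algebraMap k (CliffordAlgebra Q)).injective this

/-- Key computation: the anticommutator of `r i • x_{σ i}` and `r j • x_{σ j}`. -/
lemma weyl_smul_anticomm (hsym : ∀ i j, a i j = a j i) (σ : Equiv.Perm (Fin n))
    (r : Fin n → k) {i j : Fin n} (hij : i ≠ j) :
    (r i • weylX k n a (σ i)) * (r j • weylX k n a (σ j))
      + (r j • weylX k n a (σ j)) * (r i • weylX k n a (σ i))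
      = algebraMap k (weylV k n a) (r i * r j * a (σ i) (σ j)) := by
  rw [smul_mul_smul_comm, smul_mul_smul_comm, mul_comm (r j) (r i), ← smul_add,
    weyl_anticomm a hsym (σ.injective.ne hij), Algebra.smul_def, ← map_mul]

end aux

theorem stmt0 (k : Type) [Field k] (n : ℕ) (hn : 2 ≤ n)
    (a : Fin n → Fin n → k) (hsym : ∀ i j, a i j = a j i)
    (σ : Equiv.Perm (Fin n)) (r : Fin n → k) (hr : ∀ i, r i ≠ 0) :
    (∃ g : weylV k n a ≃ₐ[k] weylV k n a,
        ∀ i, g (weylX k n a i) = r i • weylX k n a (σ i)) ↔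
      ∀ i j, i ≠ j → a i j = r i * r j * a (σ i) (σ j) := by
  constructor
  · rintro ⟨g, hg⟩ i j hij
    have h2 := congrArg g (weyl_anticomm a hsym hij)
    rw [map_add, map_mul, map_mul, hg, hg, AlgEquiv.commutes,
      weyl_smul_anticomm a hsym σ r hij] at h2
    exact (weyl_algebraMap_injective a hsym h2).symm
  · intro hcond
    have hf : ∀ i j : Fin n, i < j →
        (r i • weylX k n a (σ i)) * (r j • weylX k n a (σ j))
          + (r j • weylX k n a (σ j)) * (r i • weylX k n a (σ i))
          = algebraMap k (weylV k n a) (a i j) := by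
      intro i j hij
      rw [weyl_smul_anticomm a hsym σ r hij.ne, ← hcond i j hij.ne]
    have hg : ∀ i j : Fin n, i < j →
        ((r (σ.symm i))⁻¹ • weylX k n a (σ.symm i)) * ((r (σ.symm j))⁻¹ • weylX k n a (σ.symm j))
          + ((r (σ.symm j))⁻¹ • weylX k n a (σ.symm j))
            * ((r (σ.symm i))⁻¹ • weylX k n a (σ.symm i))
          = algebraMap k (weylV k n a) (a i j) := by
      intro i j hij
      have hpq : σ.symm i ≠ σ.symm j := σ.symm.injective.ne hij.ne
      rw [smul_mul_smul_comm, smul_mul_smul_comm,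
        mul_comm ((r (σ.symm j))⁻¹) ((r (σ.symm i))⁻¹), ← smul_add,
        weyl_anticomm a hsym hpq, Algebra.smul_def, ← map_mul]
      congr 1
      rw [hcond _ _ hpq, Equiv.apply_symm_apply, Equiv.apply_symm_apply]
      field_simp [hr (σ.symm i), hr (σ.symm j)]
    set F : weylV k n a →ₐ[k] weylV k n a :=
      weylLift a _ (fun i => r i • weylX k n a (σ i)) hf with hF
    set G : weylV k n a →ₐ[k] weylV k n a :=
      weylLift a _ (fun i => (r (σ.symm i))⁻¹ • weylX k n a (σ.symm i)) hg with hG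
    have hGF : G.comp F = AlgHom.id k (weylV k n a) := by
      apply weyl_hom_ext
      intro i
      simp only [AlgHom.coe_comp, Function.comp_apply, AlgHom.coe_id, id_eq, hF, hG,
        weylLift_X, map_smul, Equiv.symm_apply_apply, smul_smul]
      rw [mul_inv_cancel₀ (hr i), one_smul]
    have hFG : F.comp G = AlgHom.id k (weylV k n a) := by
      apply weyl_hom_ext
      intro i
      simp only [AlgHom.coe_comp, Function.comp_apply, AlgHom.coe_id, id_eq, hF, hG,
        weylLift_X, map_smul, Equiv.apply_symm_apply, smul_smul]
      rw [inv_mul_cancel₀ (hr (σ.symm i)), one_smul]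
    refine ⟨AlgEquiv.ofAlgHom F G hFG hGF, fun i => ?_⟩
    show F (weylX k n a i) = r i • weylX k n a (σ i)
    rw [hF, weylLift_X]
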